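/- Let b > 1 and L ∈ ℕ. With B_L the L×L matrix having entries (B_L)_{i,j} = (1/2)·b^{min(i,j)-1}, let U_L be the upper triangular L×L matrix of all ones on and above the diagonal, and D_L = (1/√2)·diag(1, √(b-1), √(b²-b), …, √(b^{L-1}-b^{L-2})). Then B_L = U_Lᵀ D_L² U_L. -/
import Mathlib


open Matrix

/-- The matrix `B_L` with entries `(1/2)·b^{min(i,j)-1}` (1-based description). -/
noncomputable def Bmat6 (b : ℝ) (L : ℕ) : Matrix (Fin L) (Fin L) ℝ :=
  fun i j => (1 / 2) * b ^ (min i.val j.val)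

/-- The upper triangular matrix of ones on and above the diagonal. -/
def Umat (L : ℕ) : Matrix (Fin L) (Fin L) ℝ :=
  fun i j => if i ≤ j then 1 else 0

/-- The diagonal matrix `D_L = (1/√2)·diag(1, √(b-1), √(b²-b), …)`. -/
noncomputable def Dmat (b : ℝ) (L : ℕ) : Matrix (Fin L) (Fin L) ℝ :=
  Matrix.diagonal (fun i : Fin L =>
    if i.val = 0 then 1 / Real.sqrt 2
    else (1 / Real.sqrt 2) * Real.sqrt (b ^ i.val - b ^ (i.val - 1)))

lemma sum_f_aux (b : ℝ) (hb : 1 < b) (m : ℕ) :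
    ∑ k ∈ Finset.range (m + 1),
      (if k = 0 then (1 : ℝ) / 2 else (b ^ k - b ^ (k - 1)) / 2) = b ^ m / 2 := by
  induction m with
  | zero => simp
  | succ n ih =>
      rw [Finset.sum_range_succ, ih]
      simp only [Nat.succ_ne_zero, if_false, Nat.add_sub_cancel]
      ring

/-- Cholesky-type decomposition: `B_L = U_Lᵀ D_L² U_L` for `b > 1` and `L ≥ 1`. -/
theorem Bmat_cholesky (b : ℝ) (hb : 1 < b) (L : ℕ) (hL : 1 ≤ L) :
    Bmat6 b L = (Umat L)ᵀ * (Dmat b L * Dmat b L) * Umat L := by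
  ext i j
  simp only [Dmat, Matrix.diagonal_mul_diagonal]
  rw [Matrix.mul_apply]
  simp only [Matrix.mul_diagonal, Matrix.transpose_apply, Umat]
  set m := min i.val j.val with hm
  have key : ∀ k : Fin L,
      (if k ≤ i then (1 : ℝ) else 0) *
        ((if k.val = 0 then 1 / Real.sqrt 2
            else (1 / Real.sqrt 2) * Real.sqrt (b ^ k.val - b ^ (k.val - 1))) *
          (if k.val = 0 then 1 / Real.sqrt 2
            else (1 / Real.sqrt 2) * Real.sqrt (b ^ k.val - b ^ (k.val - 1)))) *
        (if k ≤ j then 1 else 0)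
      = if k.val ≤ m then (if k.val = 0 then (1 : ℝ) / 2
          else (b ^ k.val - b ^ (k.val - 1)) / 2) else 0 := by
    intro k
    have h2 : Real.sqrt 2 * Real.sqrt 2 = 2 := Real.mul_self_sqrt (by norm_num)
    have hsq : (if k.val = 0 then 1 / Real.sqrt 2
          else (1 / Real.sqrt 2) * Real.sqrt (b ^ k.val - b ^ (k.val - 1))) *
        (if k.val = 0 then 1 / Real.sqrt 2
          else (1 / Real.sqrt 2) * Real.sqrt (b ^ k.val - b ^ (k.val - 1)))
        = if k.val = 0 then (1 : ℝ) / 2 else (b ^ k.val - b ^ (k.val - 1)) / 2 := by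
      by_cases hk : k.val = 0
      · simp only [hk, if_true]
        rw [div_mul_div_comm, one_mul, h2]
      · simp only [hk, if_false]
        have hnn : 0 ≤ b ^ k.val - b ^ (k.val - 1) := by
          have := pow_le_pow_right₀ hb.le (Nat.sub_le k.val 1)
          linarith
        rw [show (1 / Real.sqrt 2) * Real.sqrt (b ^ k.val - b ^ (k.val - 1)) *
            ((1 / Real.sqrt 2) * Real.sqrt (b ^ k.val - b ^ (k.val - 1)))
            = (Real.sqrt (b ^ k.val - b ^ (k.val - 1)) *
              Real.sqrt (b ^ k.val - b ^ (k.val - 1))) / (Real.sqrt 2 * Real.sqrt 2) by ring,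
          Real.mul_self_sqrt hnn, h2]
    rw [hsq]
    by_cases hki : k ≤ i <;> by_cases hkj : k ≤ j
    · have : k.val ≤ m := le_min hki hkj
      simp [hki, hkj, this]
    · have : ¬ k.val ≤ m := fun h => hkj (Fin.le_def.mpr (le_trans h (min_le_right _ _)))
      simp [hki, hkj, this]
    · have : ¬ k.val ≤ m := fun h => hki (Fin.le_def.mpr (le_trans h (min_le_left _ _)))
      simp [hki, hkj, this]
    · have : ¬ k.val ≤ m := fun h => hki (Fin.le_def.mpr (le_trans h (min_le_left _ _)))
      simp [hki, hkj, this]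
  rw [Finset.sum_congr rfl (fun k _ => key k)]
  rw [Fin.sum_univ_eq_sum_range (fun k => if k ≤ m then (if k = 0 then (1 : ℝ) / 2
      else (b ^ k - b ^ (k - 1)) / 2) else 0)]
  have hmL : m + 1 ≤ L := Nat.succ_le_of_lt (lt_of_le_of_lt (min_le_left _ _) i.isLt)
  rw [← Finset.sum_subset (Finset.range_subset_range.mpr hmL)
      (fun k _ hk => by
        have : ¬ k ≤ m := fun h => hk (Finset.mem_range.mpr (Nat.lt_succ_of_le h))
        simp [this])]
  have : ∀ k ∈ Finset.range (m + 1),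
      (if k ≤ m then (if k = 0 then (1 : ℝ) / 2 else (b ^ k - b ^ (k - 1)) / 2) else 0)
      = (if k = 0 then (1 : ℝ) / 2 else (b ^ k - b ^ (k - 1)) / 2) := by
    intro k hk
    simp [Nat.le_of_lt_succ (Finset.mem_range.mp hk)]
  rw [Finset.sum_congr rfl this, sum_f_aux b hb m]
  simp [Bmat6]
  ring
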